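/- arXiv:0708.0074 — 2 statements merged into one kernel-verified Lean document; each statement's English description precedes it below -/
import Mathlib

section
/- For any parameters (α_0,...,α_4) summing to 1, the Bäcklund transformation s_0 maps a solution (f_0,...,f_4) of A4(α_0,α_1,α_2,α_3,α_4) with f_0 not identically zero to a solution (f_0, f_1+α_0/f_0, f_2, f_3, f_4-α_0/f_0) of A4(-α_0, α_1+α_0, α_2, α_3, α_4+α_0). -/
/-- The Bäcklund transformation `s₀` of the `A₄⁽¹⁾` Painlevé equation: it maps a solution
`(f₀,…,f₄)` of `A₄(α₀,…,α₄)` with `f₀` nonvanishing (on a domain `U`) to the solution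
`(f₀, f₁+α₀/f₀, f₂, f₃, f₄-α₀/f₀)` of `A₄(-α₀, α₁+α₀, α₂, α₃, α₄+α₀)`. -/
theorem stmt_5 (α : Fin 5 → ℂ) (hα : ∑ i : Fin 5, α i = 1)
    (U : Set ℂ) (hU : IsOpen U)
    (f : Fin 5 → ℂ → ℂ)
    (hf0 : ∀ t ∈ U, f 0 t ≠ 0)
    (hder : ∀ i : Fin 5, ∀ t ∈ U,
      HasDerivAt (f i)
        (f i t * (f (i + 1) t - f (i + 2) t + f (i + 3) t - f (i + 4) t) + α i) t)
    (hsum : ∀ t ∈ U, ∑ i : Fin 5, f i t = t) :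
    let g : Fin 5 → ℂ → ℂ :=
      ![f 0, fun t => f 1 t + α 0 / f 0 t, f 2, f 3, fun t => f 4 t - α 0 / f 0 t]
    let β : Fin 5 → ℂ := ![-α 0, α 1 + α 0, α 2, α 3, α 4 + α 0]
    (∀ i : Fin 5, ∀ t ∈ U,
      HasDerivAt (g i)
        (g i t * (g (i + 1) t - g (i + 2) t + g (i + 3) t - g (i + 4) t) + β i) t) ∧
    (∀ t ∈ U, ∑ i : Fin 5, g i t = t) := by
  intro g β
  refine ⟨?_, ?_⟩
  · intro i t ht
    have h0 : HasDerivAt (f 0) (f 0 t * (f 1 t - f 2 t + f 3 t - f 4 t) + α 0) t := hder 0 t ht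
    have h1 : HasDerivAt (f 1) (f 1 t * (f 2 t - f 3 t + f 4 t - f 0 t) + α 1) t := hder 1 t ht
    have h2 : HasDerivAt (f 2) (f 2 t * (f 3 t - f 4 t + f 0 t - f 1 t) + α 2) t := hder 2 t ht
    have h3 : HasDerivAt (f 3) (f 3 t * (f 4 t - f 0 t + f 1 t - f 2 t) + α 3) t := hder 3 t ht
    have h4 : HasDerivAt (f 4) (f 4 t * (f 0 t - f 1 t + f 2 t - f 3 t) + α 4) t := hder 4 t ht
    have hne := hf0 t ht
    have hq : HasDerivAt (fun t => α 0 / f 0 t)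
        ((0 * f 0 t - α 0 * (f 0 t * (f 1 t - f 2 t + f 3 t - f 4 t) + α 0)) / (f 0 t) ^ 2) t :=
      (hasDerivAt_const t (α 0)).div h0 hne
    fin_cases i
    · show HasDerivAt (f 0)
        (f 0 t * ((f 1 t + α 0 / f 0 t) - f 2 t + f 3 t - (f 4 t - α 0 / f 0 t)) + -α 0) t
      convert h0 using 1
      field_simp
      ring
    · show HasDerivAt (fun t => f 1 t + α 0 / f 0 t)
        ((f 1 t + α 0 / f 0 t) * (f 2 t - f 3 t + (f 4 t - α 0 / f 0 t) - f 0 t) + (α 1 + α 0)) t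
      refine (h1.add hq).congr_deriv ?_
      field_simp
      ring
    · show HasDerivAt (f 2)
        (f 2 t * (f 3 t - (f 4 t - α 0 / f 0 t) + f 0 t - (f 1 t + α 0 / f 0 t)) + α 2) t
      convert h2 using 1
      ring
    · show HasDerivAt (f 3)
        (f 3 t * ((f 4 t - α 0 / f 0 t) - f 0 t + (f 1 t + α 0 / f 0 t) - f 2 t) + α 3) t
      convert h3 using 1
      ring
    · show HasDerivAt (fun t => f 4 t - α 0 / f 0 t)
        ((f 4 t - α 0 / f 0 t) * (f 0 t - (f 1 t + α 0 / f 0 t) + f 2 t - f 3 t) + (α 4 + α 0)) t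
      refine (h4.sub hq).congr_deriv ?_
      field_simp
      ring
  · intro t ht
    have h := hsum t ht
    simp only [Fin.sum_univ_five] at h
    rw [Fin.sum_univ_five]
    show f 0 t + (f 1 t + α 0 / f 0 t) + f 2 t + f 3 t + (f 4 t - α 0 / f 0 t) = t
    linear_combination h
end

section
/- Define H-hat := f_0 f_1 f_2 + f_1 f_2 f_3 + f_2 f_3 f_4 + f_3 f_4 f_0 + f_4 f_0 f_1. If, near t = c, f_i = (t-c)^{-1} + O(1), f_{i+1} = -(t-c)^{-1} + O(1), f_{i+2} = O(t-c), f_{i+3} = O(t-c), f_{i+4} = O(t-c), with the Laurent coefficients as in the Painlevé expansion (in particular leading linear coefficients -α_{i+2}, α_{i+3}/3, -α_{i+4} for f_{i+2}, f_{i+3}, f_{i+4} and constant terms c/2 for f_i, f_{i+1}), then the residue of H-hat at t = c equals α_{i+2} + α_{i+4}. -/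
lemma mul_coeff_zero_of_lt (f g : LaurentSeries ℂ) (a b : ℤ)
    (hf : ∀ n : ℤ, n < a → f.coeff n = 0) (hg : ∀ n : ℤ, n < b → g.coeff n = 0)
    {n : ℤ} (hn : n < a + b) : (f * g).coeff n = 0 := by
  rw [HahnSeries.coeff_mul]
  apply Finset.sum_eq_zero
  intro ij hij
  rw [Finset.mem_addAntidiagonal] at hij
  rcases lt_or_ge ij.1 a with h | h
  · rw [hf _ h, zero_mul]
  · rw [hg ij.2 (by omega), mul_zero]

lemma mul_coeff_at1 (f g : LaurentSeries ℂ) (a b : ℤ)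
    (hf : ∀ n : ℤ, n < a → f.coeff n = 0) (hg : ∀ n : ℤ, n < b → g.coeff n = 0) :
    (f * g).coeff (a + b + 1)
      = f.coeff a * g.coeff (b + 1) + f.coeff (a + 1) * g.coeff b := by
  classical
  rw [HahnSeries.coeff_mul]
  set S := Finset.antidiagonal f.isPWO_support g.isPWO_support (a + b + 1) with hS
  set P : Finset (ℤ × ℤ) := {(a, b + 1), (a + 1, b)} with hP
  have hne : ((a, b + 1) : ℤ × ℤ) ≠ (a + 1, b) := by
    intro h; have := congrArg Prod.fst h; simp at this
  have step1 : ∑ ij ∈ S, f.coeff ij.1 * g.coeff ij.2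
      = ∑ ij ∈ S ∩ P, f.coeff ij.1 * g.coeff ij.2 := by
    refine (Finset.sum_subset Finset.inter_subset_left ?_).symm
    intro ij hijS hijn
    have hP2 : ij ∉ P := fun h => hijn (Finset.mem_inter.mpr ⟨hijS, h⟩)
    rw [hS, Finset.mem_addAntidiagonal] at hijS
    rcases lt_trichotomy ij.1 a with h | h | h
    · rw [hf _ h, zero_mul]
    · exact absurd (by rw [hP]; simp [Prod.ext_iff]; left; exact ⟨h, by omega⟩) hP2
    · rcases lt_trichotomy ij.1 (a + 1) with h' | h' | h'
      · omega
      · exact absurd (by rw [hP]; simp [Prod.ext_iff]; right; exact ⟨h', by omega⟩) hP2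
      · rw [hg ij.2 (by omega), mul_zero]
  have step2 : ∑ ij ∈ S ∩ P, f.coeff ij.1 * g.coeff ij.2
      = ∑ ij ∈ P, f.coeff ij.1 * g.coeff ij.2 := by
    refine Finset.sum_subset Finset.inter_subset_right ?_
    intro ij hijP hijn
    have hijS : ij ∉ S := fun h => hijn (Finset.mem_inter.mpr ⟨h, hijP⟩)
    rw [hS, Finset.mem_addAntidiagonal] at hijS
    push_neg at hijS
    have hsum : ij.1 + ij.2 = a + b + 1 := by
      rw [hP] at hijP; simp [Prod.ext_iff] at hijP
      rcases hijP with ⟨h1, h2⟩ | ⟨h1, h2⟩ <;> omega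
    by_cases ha : f.coeff ij.1 = 0
    · rw [ha, zero_mul]
    · by_cases hb : g.coeff ij.2 = 0
      · rw [hb, mul_zero]
      · exact absurd hsum (hijS ha hb)
  rw [step1, step2, hP, Finset.sum_pair hne]

lemma mul_coeff_at (f g : LaurentSeries ℂ) (a b : ℤ)
    (hf : ∀ n : ℤ, n < a → f.coeff n = 0) (hg : ∀ n : ℤ, n < b → g.coeff n = 0) :
    (f * g).coeff (a + b) = f.coeff a * g.coeff b := by
  rw [HahnSeries.coeff_mul]
  rw [Finset.sum_eq_single (a, b)]
  · intro ij hij hne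
    rw [Finset.mem_addAntidiagonal] at hij
    rcases lt_trichotomy ij.1 a with h | h | h
    · rw [hf _ h, zero_mul]
    · exact absurd (Prod.ext h (by omega)) hne
    · rw [hg ij.2 (by omega), mul_zero]
  · intro h
    rw [Finset.mem_addAntidiagonal] at h
    push_neg at h
    by_cases ha : f.coeff a = 0
    · rw [ha, zero_mul]
    · have := h ha
      by_cases hb : g.coeff b = 0
      · rw [hb, mul_zero]
      · exact absurd rfl (this hb)

/-- Residue of the principal Hamiltonian `Ĥ = f₀f₁f₂ + f₁f₂f₃ + f₂f₃f₄ + f₃f₄f₀ + f₄f₀f₁`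
at a simple pole `t = c` of type (1): here `g₀,…,g₄` are the Laurent expansions (in the
local variable `t - c`) of `f_i, f_{i+1}, f_{i+2}, f_{i+3}, f_{i+4}`, with
`g₀ = (t-c)⁻¹ + c/2 + ⋯`, `g₁ = -(t-c)⁻¹ + c/2 + ⋯`, `g₂ = -α_{i+2}(t-c) + ⋯`,
`g₃ = (α_{i+3}/3)(t-c) + ⋯`, `g₄ = -α_{i+4}(t-c) + ⋯`.  The residue (the coefficient of
`(t-c)⁻¹`) of `Ĥ` equals `α_{i+2} + α_{i+4}`. -/
theorem stmt_11 (c a2 a3 a4 : ℂ) (g0 g1 g2 g3 g4 : LaurentSeries ℂ)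
    (h0lt : ∀ n : ℤ, n < -1 → g0.coeff n = 0) (h0m1 : g0.coeff (-1) = 1)
    (h00 : g0.coeff 0 = c / 2)
    (h1lt : ∀ n : ℤ, n < -1 → g1.coeff n = 0) (h1m1 : g1.coeff (-1) = -1)
    (h10 : g1.coeff 0 = c / 2)
    (h2lt : ∀ n : ℤ, n < 1 → g2.coeff n = 0) (h21 : g2.coeff 1 = -a2)
    (h3lt : ∀ n : ℤ, n < 1 → g3.coeff n = 0) (h31 : g3.coeff 1 = a3 / 3)
    (h4lt : ∀ n : ℤ, n < 1 → g4.coeff n = 0) (h41 : g4.coeff 1 = -a4) :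
    (g0 * g1 * g2 + g1 * g2 * g3 + g2 * g3 * g4 + g3 * g4 * g0 + g4 * g0 * g1).coeff (-1)
      = a2 + a4 := by
  -- bounds for pairwise products
  have h01lt : ∀ n : ℤ, n < -2 → (g0 * g1).coeff n = 0 := fun n hn =>
    mul_coeff_zero_of_lt g0 g1 (-1) (-1) h0lt h1lt (by omega)
  -- coeff of g0*g1 at -2 and -1
  have h01m2 : (g0 * g1).coeff (-2) = -1 := by
    have := mul_coeff_at g0 g1 (-1) (-1) h0lt h1lt
    norm_num at this; rw [this, h0m1, h1m1]; ring
  have h01m1 : (g0 * g1).coeff (-1) = 0 := by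
    have := mul_coeff_at1 g0 g1 (-1) (-1) h0lt h1lt
    norm_num at this
    rw [this, h0m1, h00, h10, h1m1]; ring
  -- term 1: (g0*g1)*g2 at -1
  have t1 : (g0 * g1 * g2).coeff (-1) = a2 := by
    have h20 : g2.coeff 0 = 0 := h2lt 0 (by norm_num)
    rw [HahnSeries.coeff_mul]
    rw [Finset.sum_eq_single ((-2 : ℤ), (1 : ℤ))]
    · rw [h01m2, h21]; ring
    · intro ij hij hne
      rw [Finset.mem_addAntidiagonal] at hij
      rcases lt_trichotomy ij.1 (-2) with h | h | h
      · rw [h01lt _ h, zero_mul]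
      · exact absurd (Prod.ext h (by omega)) hne
      · rw [h2lt ij.2 (by omega), mul_zero]
    · intro h
      rw [Finset.mem_addAntidiagonal] at h
      push_neg at h
      by_cases ha : (g0 * g1).coeff (-2) = 0
      · rw [ha, zero_mul]
      · by_cases hb : g2.coeff 1 = 0
        · rw [hb, mul_zero]
        · exact absurd (by norm_num) (h ha hb)
  -- terms 2-4 vanish
  have t2 : (g1 * g2 * g3).coeff (-1) = 0 := by
    have h12 : ∀ n : ℤ, n < 0 → (g1 * g2).coeff n = 0 := fun n hn =>
      mul_coeff_zero_of_lt g1 g2 (-1) 1 h1lt h2lt (by omega)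
    exact mul_coeff_zero_of_lt (g1 * g2) g3 0 1 h12 h3lt (by norm_num)
  have t3 : (g2 * g3 * g4).coeff (-1) = 0 := by
    have h23 : ∀ n : ℤ, n < 2 → (g2 * g3).coeff n = 0 := fun n hn =>
      mul_coeff_zero_of_lt g2 g3 1 1 h2lt h3lt (by omega)
    exact mul_coeff_zero_of_lt (g2 * g3) g4 2 1 h23 h4lt (by norm_num)
  have t4 : (g3 * g4 * g0).coeff (-1) = 0 := by
    have h34 : ∀ n : ℤ, n < 2 → (g3 * g4).coeff n = 0 := fun n hn =>
      mul_coeff_zero_of_lt g3 g4 1 1 h3lt h4lt (by omega)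
    exact mul_coeff_zero_of_lt (g3 * g4) g0 2 (-1) h34 h0lt (by norm_num)
  -- term 5: (g4*g0)*g1 at -1
  have h40lt : ∀ n : ℤ, n < 0 → (g4 * g0).coeff n = 0 := fun n hn =>
    mul_coeff_zero_of_lt g4 g0 1 (-1) h4lt h0lt (by omega)
  have h400 : (g4 * g0).coeff 0 = -a4 := by
    have := mul_coeff_at g4 g0 1 (-1) h4lt h0lt
    norm_num at this; rw [this, h41, h0m1]; ring
  have t5 : (g4 * g0 * g1).coeff (-1) = a4 := by
    rw [HahnSeries.coeff_mul]
    rw [Finset.sum_eq_single ((0 : ℤ), (-1 : ℤ))]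
    · rw [h400, h1m1]; ring
    · intro ij hij hne
      rw [Finset.mem_addAntidiagonal] at hij
      rcases lt_trichotomy ij.1 0 with h | h | h
      · rw [h40lt _ h, zero_mul]
      · exact absurd (Prod.ext h (by omega)) hne
      · rw [h1lt ij.2 (by omega), mul_zero]
    · intro h
      rw [Finset.mem_addAntidiagonal] at h
      push_neg at h
      by_cases ha : (g4 * g0).coeff 0 = 0
      · rw [ha, zero_mul]
      · by_cases hb : g1.coeff (-1) = 0
        · rw [hb, mul_zero]
        · exact absurd (by norm_num) (h ha hb)
  simp only [HahnSeries.coeff_add, t1, t2, t3, t4, t5]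
  ring
end
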